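/- arXiv:2508.16778 — 2 statements merged into one kernel-verified Lean document; each statement's English description precedes it below -/
import Mathlib

section
/- Let q : V → Z/2Z be a quadratic refinement of a nondegenerate symplectic bilinear form on a finite-dimensional Z/2Z-vector space V with symplectic basis (a_1, b_1, ..., a_g, b_g). Then the Arf invariant Arf(q) = Σ_{i=1}^g q(a_i)q(b_i) is independent of the choice of symplectic basis. -/
/-- `q` is a quadratic refinement of the bilinear form `B` over `ZMod 2`. -/
def IsQuadraticRefinement {V : Type*} [AddCommGroup V] [Module (ZMod 2) V]
    (B : V → V → ZMod 2) (q : V → ZMod 2) : Prop :=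
  ∀ x y, q (x + y) = q x + q y + B x y

/-- `e` is a symplectic basis `(a_i, b_i)` for the form `B` (indices: `inl i ↦ a_i`,
`inr i ↦ b_i`). -/
def IsSymplecticBasis {V : Type*} [AddCommGroup V] [Module (ZMod 2) V]
    (B : V → V → ZMod 2) {g : ℕ} (e : Module.Basis (Fin g ⊕ Fin g) (ZMod 2) V) : Prop :=
  (∀ i j, B (e (.inl i)) (e (.inr j)) = if i = j then 1 else 0) ∧
  (∀ i j, B (e (.inr i)) (e (.inl j)) = if i = j then 1 else 0) ∧
  (∀ i j, B (e (.inl i)) (e (.inl j)) = 0) ∧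
  (∀ i j, B (e (.inr i)) (e (.inr j)) = 0)

/-- The Arf sum `Σ q(a_i) q(b_i)` of a quadratic refinement with respect to a
symplectic basis. -/
noncomputable def arfSum {V : Type*} [AddCommGroup V] [Module (ZMod 2) V] {g : ℕ}
    (e : Module.Basis (Fin g ⊕ Fin g) (ZMod 2) V) (q : V → ZMod 2) : ZMod 2 :=
  ∑ i : Fin g, q (e (.inl i)) * q (e (.inr i))

namespace ArfAux

/-- The sign character on `ZMod 2`. -/
def chi (x : ZMod 2) : ℤ := if x = 0 then 1 else -1

lemma chi_add : ∀ x y : ZMod 2, chi (x + y) = chi x * chi y := by decide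

lemma chi_inj : ∀ x y : ZMod 2, chi x = chi y → x = y := by decide

lemma chi_sum {ι : Type*} (s : Finset ι) (f : ι → ZMod 2) :
    chi (∑ i ∈ s, f i) = ∏ i ∈ s, chi (f i) := by
  induction s using Finset.cons_induction with
  | empty => simp [chi]
  | cons a s ha ih => rw [Finset.sum_cons, Finset.prod_cons, chi_add, ih]

lemma pair_sum (α β : ZMod 2) :
    ∑ p : ZMod 2 × ZMod 2, chi (p.1 * α + p.2 * β + p.1 * p.2) = 2 * chi (α * β) := by
  revert α β; decide

lemma zmod2_cases : ∀ u : ZMod 2, u = 0 ∨ u = 1 := by decide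

section

variable {V : Type*} [AddCommGroup V] [Module (ZMod 2) V]
  (B : V →ₗ[ZMod 2] V →ₗ[ZMod 2] ZMod 2) (q : V → ZMod 2)
  (hq : IsQuadraticRefinement (fun x y => B x y) q)

include hq

lemma q_zero : q 0 = 0 := by
  have h := hq 0 0
  simp only [add_zero, map_zero, LinearMap.zero_apply] at h
  have h2 : q 0 + q 0 = 0 := CharTwo.add_self_eq_zero _
  rw [h2] at h
  exact h

/-- `q` is additive on families that are pairwise orthogonal for `B`. -/
lemma q_sum {ι : Type*} (s : Finset ι) (v : ι → V)
    (h : ∀ i ∈ s, ∀ j ∈ s, i ≠ j → B (v i) (v j) = 0) :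
    q (∑ i ∈ s, v i) = ∑ i ∈ s, q (v i) := by
  induction s using Finset.cons_induction with
  | empty => simpa using q_zero B q hq
  | cons a s ha ih =>
    rw [Finset.sum_cons, Finset.sum_cons, hq]
    dsimp only
    have hB : B (v a) (∑ i ∈ s, v i) = 0 := by
      rw [map_sum]
      refine Finset.sum_eq_zero fun j hj => ?_
      exact h a (Finset.mem_cons_self _ _) j (Finset.mem_cons_of_mem hj)
        (fun e => ha (e ▸ hj))
    rw [hB, add_zero, ih (fun i hi j hj hij =>
      h i (Finset.mem_cons_of_mem hi) j (Finset.mem_cons_of_mem hj) hij)]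

lemma q_pair (a b : V) (hab : B a b = 1) (u v : ZMod 2) :
    q (u • a + v • b) = u * q a + v * q b + u * v := by
  rcases zmod2_cases u with hu | hu <;> rcases zmod2_cases v with hv | hv <;>
        subst hu <;> subst hv <;>
      simp only [zero_smul, one_smul, zero_add, add_zero, zero_mul, one_mul, mul_zero,
        mul_one] <;>
    simp [q_zero B q hq, hq a b, hab]

variable {g : ℕ} (e : Module.Basis (Fin g ⊕ Fin g) (ZMod 2) V)
  (he : IsSymplecticBasis (fun x y => B x y) e)

/-- The vector with paired coordinates `d`. -/
noncomputable def vec (d : Fin g → ZMod 2 × ZMod 2) : V :=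
  ∑ i : Fin g, ((d i).1 • e (.inl i) + (d i).2 • e (.inr i))

omit hq in
include he in
lemma orth (d : Fin g → ZMod 2 × ZMod 2) {i j : Fin g} (hij : i ≠ j) :
    B ((d i).1 • e (.inl i) + (d i).2 • e (.inr i))
      ((d j).1 • e (.inl j) + (d j).2 • e (.inr j)) = 0 := by
  obtain ⟨h1, h2, h3, h4⟩ := he
  have e1 := h1 i j; have e2 := h2 i j; have e3 := h3 i j; have e4 := h4 i j
  rw [if_neg hij] at e1 e2
  simp only at e1 e2 e3 e4
  simp [map_add, map_smul, e1, e2, e3, e4]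

include he in
lemma q_vec (d : Fin g → ZMod 2 × ZMod 2) :
    q (vec e d) = ∑ i : Fin g,
      ((d i).1 * q (e (.inl i)) + (d i).2 * q (e (.inr i)) + (d i).1 * (d i).2) := by
  rw [vec, q_sum B q hq _ _ (fun i _ j _ hij => orth B e he d hij)]
  refine Finset.sum_congr rfl fun i _ => ?_
  refine q_pair B q hq _ _ ?_ _ _
  have := he.1 i i
  simpa using this

include he in
lemma gauss_sum :
    ∑ d : Fin g → ZMod 2 × ZMod 2, chi (q (vec e d)) = 2 ^ g * chi (arfSum e q) := by
  have step : ∀ d : Fin g → ZMod 2 × ZMod 2, chi (q (vec e d)) =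
      ∏ i : Fin g,
        chi ((d i).1 * q (e (.inl i)) + (d i).2 * q (e (.inr i)) + (d i).1 * (d i).2) := by
    intro d
    rw [q_vec B q hq e he, chi_sum]
  calc ∑ d : Fin g → ZMod 2 × ZMod 2, chi (q (vec e d))
      = ∑ d : Fin g → ZMod 2 × ZMod 2, ∏ i : Fin g,
          chi ((d i).1 * q (e (.inl i)) + (d i).2 * q (e (.inr i)) + (d i).1 * (d i).2) :=
        Finset.sum_congr rfl fun d _ => step d
    _ = ∏ i : Fin g, ∑ p : ZMod 2 × ZMod 2,
          chi (p.1 * q (e (.inl i)) + p.2 * q (e (.inr i)) + p.1 * p.2) := by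
        rw [Finset.prod_univ_sum]
        rw [Fintype.piFinset_univ]
    _ = ∏ i : Fin g, 2 * chi (q (e (.inl i)) * q (e (.inr i))) := by
        refine Finset.prod_congr rfl fun i _ => pair_sum _ _
    _ = 2 ^ g * chi (arfSum e q) := by
        rw [Finset.prod_mul_distrib, Finset.prod_const, arfSum, chi_sum]
        simp

end

end ArfAux

/-- The Arf invariant `Σ q(a_i) q(b_i)` of a quadratic refinement of a nondegenerate
symplectic bilinear form over `ZMod 2` does not depend on the choice of symplectic basis. -/
theorem arf_independent_of_symplectic_basis
    {V : Type*} [AddCommGroup V] [Module (ZMod 2) V]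
    (B : V →ₗ[ZMod 2] V →ₗ[ZMod 2] ZMod 2) (q : V → ZMod 2)
    (hq : IsQuadraticRefinement (fun x y => B x y) q)
    {g g' : ℕ} (e : Module.Basis (Fin g ⊕ Fin g) (ZMod 2) V)
    (e' : Module.Basis (Fin g' ⊕ Fin g') (ZMod 2) V)
    (he : IsSymplecticBasis (fun x y => B x y) e)
    (he' : IsSymplecticBasis (fun x y => B x y) e') :
    arfSum e q = arfSum e' q := by
  classical
  -- the two bases have the same cardinality, so g = g'
  have hg : g = g' := by
    have h1 := Module.finrank_eq_card_basis e
    have h2 := Module.finrank_eq_card_basis e'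
    simp [Fintype.card_sum] at h1 h2
    omega
  subst hg
  -- coefficient parametrizations of V
  let E : (Fin g → ZMod 2 × ZMod 2) ≃ (Fin g ⊕ Fin g → ZMod 2) :=
    { toFun := fun d => Sum.elim (fun i => (d i).1) (fun i => (d i).2)
      invFun := fun c i => (c (.inl i), c (.inr i))
      left_inv := fun d => rfl
      right_inv := fun c => by funext x; cases x <;> rfl }
  have hvec : ∀ (f : Module.Basis (Fin g ⊕ Fin g) (ZMod 2) V) (d : Fin g → ZMod 2 × ZMod 2),
      ArfAux.vec f d = f.equivFun.symm (E d) := by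
    intro f d
    rw [Module.Basis.equivFun_symm_apply, ArfAux.vec, Fintype.sum_sum_type]
    rw [← Finset.sum_add_distrib]
    rfl
  let ψ : (Fin g → ZMod 2 × ZMod 2) ≃ V := E.trans e.equivFun.symm.toEquiv
  let ψ' : (Fin g → ZMod 2 × ZMod 2) ≃ V := E.trans e'.equivFun.symm.toEquiv
  have hψ : ∀ d, ArfAux.vec e d = ψ d := fun d => hvec e d
  have hψ' : ∀ d, ArfAux.vec e' d = ψ' d := fun d => hvec e' d
  have hsum : ∑ d : Fin g → ZMod 2 × ZMod 2, ArfAux.chi (q (ψ d))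
      = ∑ d : Fin g → ZMod 2 × ZMod 2, ArfAux.chi (q (ψ' d)) := by
    refine Fintype.sum_equiv (ψ.trans ψ'.symm) _ _ fun d => ?_
    simp
  have h1 := ArfAux.gauss_sum B q hq e he
  have h2 := ArfAux.gauss_sum B q hq e' he'
  simp only [hψ] at h1
  simp only [hψ'] at h2
  rw [hsum, h2] at h1
  have hcan : ArfAux.chi (arfSum e' q) = ArfAux.chi (arfSum e q) :=
    mul_left_cancel₀ (by positivity : (2:ℤ)^g ≠ 0) h1
  exact (ArfAux.chi_inj _ _ hcan).symm
end

section
/- Let V be a finite-dimensional vector space over Z/2Z with a nondegenerate symplectic form λ, and q a quadratic refinement. Define the Brown invariant (Gauss sum) Σ_{v ∈ V} (-1)^{q(v)}. Then this sum equals ±2^{dim(V)/2}, with sign +1 if Arf(q) = 0 and −1 if Arf(q) = 1. -/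
def eps (a : ZMod 2) : ℤ := (-1) ^ a.val

lemma eps_add (a b : ZMod 2) : eps (a + b) = eps a * eps b := by revert a b; decide

lemma eps_sum {ι : Type*} (s : Finset ι) (f : ι → ZMod 2) :
    eps (∑ i ∈ s, f i) = ∏ i ∈ s, eps (f i) := by
  classical
  induction s using Finset.cons_induction with
  | empty => simp [eps]
  | cons i s hi ih => rw [Finset.sum_cons, Finset.prod_cons, eps_add, ih]

lemma eps_cell : ∀ a b : ZMod 2,
    (∑ p : ZMod 2 × ZMod 2, eps (p.1 * a + p.2 * b + p.1 * p.2)) = 2 * eps (a * b) := by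
  decide

section

variable {V : Type*} [AddCommGroup V] [Module (ZMod 2) V]
  (B : V →ₗ[ZMod 2] V →ₗ[ZMod 2] ZMod 2) (q : V → ZMod 2)

lemma q_zero (hq : IsQuadraticRefinement (fun x y => B x y) q) : q 0 = 0 := by
  have h := hq 0 0
  simp only [add_zero, map_zero, LinearMap.zero_apply] at h
  have h2 : q 0 + q 0 = 0 := CharTwo.add_self_eq_zero _
  rw [h2] at h
  exact h

lemma q_smul (hq : IsQuadraticRefinement (fun x y => B x y) q) (c : ZMod 2) (v : V) :
    q (c • v) = c * q v := by
  have h : ∀ c : ZMod 2, c = 0 ∨ c = 1 := by decide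
  rcases h c with h | h <;> subst h
  · simp [q_zero B q hq]
  · simp

lemma q_sum (hq : IsQuadraticRefinement (fun x y => B x y) q)
    {ι : Type*} (s : Finset ι) (f : ι → V)
    (h : ∀ i ∈ s, ∀ j ∈ s, B (f i) (f j) = 0) :
    q (∑ i ∈ s, f i) = ∑ i ∈ s, q (f i) := by
  classical
  induction s using Finset.cons_induction with
  | empty => simpa using q_zero B q hq
  | cons i s hi ih =>
    rw [Finset.sum_cons, hq, Finset.sum_cons,
      ih (fun a ha b hb => h a (Finset.mem_cons_of_mem ha) b (Finset.mem_cons_of_mem hb))]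
    have hz : (B (f i)) (∑ j ∈ s, f j) = 0 := by
      rw [map_sum]
      exact Finset.sum_eq_zero fun j hj =>
        h i (Finset.mem_cons_self i s) j (Finset.mem_cons_of_mem hj)
    simp only [hz, add_zero]

end

def E2 (g : ℕ) : (Fin g → ZMod 2 × ZMod 2) ≃ ((Fin g ⊕ Fin g) → ZMod 2) where
  toFun z := Sum.elim (fun i => (z i).1) (fun i => (z i).2)
  invFun c i := (c (.inl i), c (.inr i))
  left_inv z := by funext i; simp
  right_inv c := by funext i; cases i <;> simp

/-- The Brown/Gauss sum `Σ_{v ∈ V} (-1)^{q(v)}` of a quadratic refinement of a nondegenerate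
symplectic form on a `2g`-dimensional `ZMod 2`-vector space equals `±2^g`, with sign `+`
exactly when the Arf invariant is `0` and sign `-` exactly when it is `1`. -/
theorem gauss_sum_eq_sign_arf_mul_two_pow
    {V : Type*} [AddCommGroup V] [Module (ZMod 2) V] [Fintype V]
    (B : V →ₗ[ZMod 2] V →ₗ[ZMod 2] ZMod 2) (q : V → ZMod 2)
    (hq : IsQuadraticRefinement (fun x y => B x y) q)
    {g : ℕ} (e : Module.Basis (Fin g ⊕ Fin g) (ZMod 2) V)
    (he : IsSymplecticBasis (fun x y => B x y) e) :
    ∑ v : V, ((-1 : ℤ)) ^ (q v).val =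
      (if arfSum e q = 0 then 1 else -1) * 2 ^ g := by
  classical
  obtain ⟨h1, h2, h3, h4⟩ := he
  -- key formula for q on coordinates
  have key : ∀ c : (Fin g ⊕ Fin g) → ZMod 2,
      q (e.equivFun.symm c) = ∑ i : Fin g,
        (c (.inl i) * q (e (.inl i)) + c (.inr i) * q (e (.inr i))
          + c (.inl i) * c (.inr i)) := by
    intro c
    rw [Module.Basis.equivFun_symm_apply, Fintype.sum_sum_type, hq]
    have hx : q (∑ i : Fin g, c (.inl i) • e (.inl i))
        = ∑ i : Fin g, c (.inl i) * q (e (.inl i)) := by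
      rw [q_sum B q hq _ _ (fun i _ j _ => by simp [h3 i j])]
      exact Finset.sum_congr rfl fun i _ => q_smul B q hq _ _
    have hy : q (∑ i : Fin g, c (.inr i) • e (.inr i))
        = ∑ i : Fin g, c (.inr i) * q (e (.inr i)) := by
      rw [q_sum B q hq _ _ (fun i _ j _ => by simp [h4 i j])]
      exact Finset.sum_congr rfl fun i _ => q_smul B q hq _ _
    have hB : (B (∑ i : Fin g, c (.inl i) • e (.inl i)))
        (∑ j : Fin g, c (.inr j) • e (.inr j))
        = ∑ i : Fin g, c (.inl i) * c (.inr i) := by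
      simp only [map_sum, LinearMap.sum_apply, map_smul, LinearMap.smul_apply,
        smul_eq_mul, h1, mul_ite, mul_one, mul_zero]
      simp only [Finset.sum_ite_eq', Finset.mem_univ, if_true]
      exact Finset.sum_congr rfl fun i _ => mul_comm _ _
    simp only [hx, hy, hB]
    rw [← Finset.sum_add_distrib, ← Finset.sum_add_distrib]
  -- reindex the sum over V by coordinates
  have step1 : ∑ v : V, ((-1 : ℤ)) ^ (q v).val
      = ∑ c : (Fin g ⊕ Fin g) → ZMod 2, eps (q (e.equivFun.symm c)) := by
    exact (Equiv.sum_comp e.equivFun.symm.toEquiv (fun v => eps (q v))).symm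
  rw [step1]
  -- rewrite via key and eps_sum
  have step2 : ∀ c : (Fin g ⊕ Fin g) → ZMod 2,
      eps (q (e.equivFun.symm c)) = ∏ i : Fin g,
        eps (c (.inl i) * q (e (.inl i)) + c (.inr i) * q (e (.inr i))
          + c (.inl i) * c (.inr i)) := by
    intro c
    rw [key c, eps_sum]
  simp only [step2]
  -- combine the two coordinate functions into one
  set F : Fin g → ZMod 2 × ZMod 2 → ℤ := fun i p =>
    eps (p.1 * q (e (.inl i)) + p.2 * q (e (.inr i)) + p.1 * p.2) with hF
  have step3 : ∑ c : (Fin g ⊕ Fin g) → ZMod 2, ∏ i : Fin g,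
      eps (c (.inl i) * q (e (.inl i)) + c (.inr i) * q (e (.inr i))
        + c (.inl i) * c (.inr i))
      = ∑ z : Fin g → ZMod 2 × ZMod 2, ∏ i : Fin g, F i (z i) := by
    rw [← Equiv.sum_comp (E2 g) (fun c => ∏ i : Fin g,
      eps (c (.inl i) * q (e (.inl i)) + c (.inr i) * q (e (.inr i))
        + c (.inl i) * c (.inr i)))]
    rfl
  rw [step3]
  have step4 : ∑ z : Fin g → ZMod 2 × ZMod 2, ∏ i : Fin g, F i (z i)
      = ∏ i : Fin g, ∑ p : ZMod 2 × ZMod 2, F i p := by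
    rw [Finset.prod_univ_sum]
    rw [Fintype.piFinset_univ]
  rw [step4]
  have step5 : ∀ i : Fin g, ∑ p : ZMod 2 × ZMod 2, F i p
      = 2 * eps (q (e (.inl i)) * q (e (.inr i))) := fun i => eps_cell _ _
  simp only [step5]
  rw [Finset.prod_mul_distrib, Finset.prod_const, ← eps_sum]
  have harf : (∑ i : Fin g, q (e (.inl i)) * q (e (.inr i))) = arfSum e q := rfl
  rw [harf, Finset.card_univ, Fintype.card_fin]
  have h : arfSum e q = 0 ∨ arfSum e q = 1 := by
    have : ∀ c : ZMod 2, c = 0 ∨ c = 1 := by decide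
    exact this _
  rcases h with h | h <;> rw [h] <;>
    simp [eps, show ((0 : ZMod 2)).val = 0 from rfl, show ((1 : ZMod 2)).val = 1 from rfl]
end
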